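/- If every APS layer input length is divisible by the stride s and all polyphase norm maxima are attained uniquely, then the full pipeline — FFT, followed by alternating shift-equivariant layers (complex convolution, elementwise ComplexReLU) and APS layers, followed by global average pooling — produces the same final output for x and for its modulation x_d[n] = x[n] e^{2πi m n/N} for any integer m. -/

import Mathlib

open Complex Finset

noncomputable section

/-- Circular shift by `m` bins: `(shift N m x) k = x ((k - m) mod N)`. -/
def shift (N : ℕ) (m : ℤ) (x : Fin N → ℂ) : Fin N → ℂ :=
  fun k => x ⟨(((k : ℤ) - m) % N).toNat, by
    have hN : 0 < N := k.pos
    have h1 := Int.emod_nonneg ((k : ℤ) - m) (by exact_mod_cast hN.ne' : (N:ℤ) ≠ 0)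
    have h2 := Int.emod_lt_of_pos ((k : ℤ) - m) (by exact_mod_cast hN : (0:ℤ) < N)
    omega⟩

/-- Polyphase component at offset `j`: the vector `k ↦ x (j + k·s)`. -/
def poly (N s : ℕ) (j : Fin s) (x : Fin N → ℂ) : Fin (N / s) → ℂ :=
  fun k => x ⟨((j : ℕ) + (k : ℕ) * s) % N,
    Nat.mod_lt _ (lt_of_lt_of_le k.pos (Nat.div_le_self N s))⟩

/-- Squared ℓ2 norm of a finite complex vector. -/
def nrm2 {L : ℕ} (v : Fin L → ℂ) : ℝ := ∑ k, ‖v k‖ ^ 2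

/-- ℓ2 norm of a finite complex vector. -/
def l2 {L : ℕ} (v : Fin L → ℂ) : ℝ := Real.sqrt (nrm2 v)

/-- Multiset of entries of a vector. -/
def entries {L : ℕ} (v : Fin L → ℂ) : Multiset ℂ := Finset.univ.val.map v

/-- The element of `Fin s` given by `a mod s`. -/
def modFin (s : ℕ) (hs : 0 < s) (a : ℤ) : Fin s :=
  ⟨(a % s).toNat, by
    have h1 := Int.emod_nonneg a (by exact_mod_cast hs.ne' : (s:ℤ) ≠ 0)
    have h2 := Int.emod_lt_of_pos a (by exact_mod_cast hs : (0:ℤ) < s)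
    omega⟩

/-- Circular convolution `(x ⋆ w)[k] = Σ_j x[(k-j) mod N] w[j]`. -/
def cconv (N : ℕ) (x w : Fin N → ℂ) : Fin N → ℂ :=
  fun k => ∑ j : Fin N, shift N (j : ℤ) x k * w j

/-- Elementwise complex ReLU. -/
def crelu {L : ℕ} (x : Fin L → ℂ) : Fin L → ℂ :=
  fun k => ⟨max (x k).re 0, max (x k).im 0⟩

/-- Global average pooling. -/
def gap {L : ℕ} (x : Fin L → ℂ) : ℂ := (∑ k, x k) / L

/-- Discrete Fourier transform. -/
def dft (N : ℕ) (x : Fin N → ℂ) : Fin N → ℂ :=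
  fun k => ∑ n : Fin N, x n * Complex.exp (-2 * Real.pi * Complex.I * k * n / N)

/-- There is a unique polyphase offset of maximal ℓ2 norm. -/
def uniqueMax (L s : ℕ) (v : Fin L → ℂ) : Prop :=
  ∃! j : Fin s, ∀ j' : Fin s, l2 (poly L s j' v) ≤ l2 (poly L s j v)

/-- The offset selected by APS: a polyphase component of maximal ℓ2 norm. -/
noncomputable def apsIdx (L s : ℕ) (hs : 0 < s) (v : Fin L → ℂ) : Fin s :=
  (Finset.exists_max_image (Finset.univ : Finset (Fin s)) (fun j => l2 (poly L s j v))
    (Finset.univ_nonempty_iff.mpr ⟨⟨0, hs⟩⟩)).choose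

/-- APS pooling layer: outputs the polyphase component of maximal ℓ2 norm. -/
noncomputable def aps (L s : ℕ) (hs : 0 < s) (v : Fin L → ℂ) : Fin (L / s) → ℂ :=
  poly L s (apsIdx L s hs v) v

/-- One convolution + ComplexReLU layer. -/
noncomputable def layer (L : ℕ) (w u : Fin L → ℂ) : Fin L → ℂ :=
  crelu (cconv L u w)

/-- The full network: FFT, then three (conv, ReLU, APS) blocks, then global average pool. -/
noncomputable def net (N s : ℕ) (hs : 0 < s)
    (w1 : Fin N → ℂ) (w2 : Fin (N / s) → ℂ) (w3 : Fin (N / s / s) → ℂ)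
    (x : Fin N → ℂ) : ℂ :=
  gap (aps (N / s / s) s hs (layer (N / s / s) w3
        (aps (N / s) s hs (layer (N / s) w2
          (aps N s hs (layer N w1 (dft N x)))))))

/-! ### Auxiliary lemmas -/

/-- The index map underlying `shift`. -/
def sidx (n : ℕ) (a : ℤ) (k : Fin n) : Fin n :=
  ⟨(((k : ℤ) - a) % n).toNat, by
    have hn : 0 < n := k.pos
    have h1 := Int.emod_nonneg ((k:ℤ) - a) (by exact_mod_cast hn.ne' : (n:ℤ) ≠ 0)
    have h2 := Int.emod_lt_of_pos ((k:ℤ) - a) (by exact_mod_cast hn : (0:ℤ) < n)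
    omega⟩

lemma sidx_injective (n : ℕ) (a : ℤ) : Function.Injective (sidx n a) := by
  intro k1 k2 h
  have hn : 0 < n := k1.pos
  have hne : (n:ℤ) ≠ 0 := by exact_mod_cast hn.ne'
  have h1 := Int.emod_nonneg ((k1:ℤ) - a) hne
  have h2 := Int.emod_nonneg ((k2:ℤ) - a) hne
  have h' : ((k1:ℤ) - a) % n = ((k2:ℤ) - a) % n := by
    have := congrArg (fun p : Fin n => ((p : ℕ) : ℤ)) h
    simp only [sidx] at this
    omega
  have hm : (k1:ℤ) ≡ (k2:ℤ) [ZMOD (n:ℤ)] := by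
    have hmod : ((k1:ℤ) - a) ≡ ((k2:ℤ) - a) [ZMOD (n:ℤ)] := h'
    simpa using hmod.add_right a
  have e1 : (k1:ℤ) % n = (k1:ℤ) := Int.emod_eq_of_lt (by positivity) (by exact_mod_cast k1.is_lt)
  have e2 : (k2:ℤ) % n = (k2:ℤ) := Int.emod_eq_of_lt (by positivity) (by exact_mod_cast k2.is_lt)
  have : (k1:ℤ) = (k2:ℤ) := by rw [← e1, ← e2]; exact hm
  exact Fin.ext (by exact_mod_cast this)

lemma sum_sidx {M : Type*} [AddCommMonoid M] (n : ℕ) (a : ℤ) (g : Fin n → M) :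
    ∑ k, g (sidx n a k) = ∑ k, g k :=
  Fintype.sum_bijective (sidx n a) ((Finite.injective_iff_bijective).mp (sidx_injective n a))
    _ _ (fun _ => rfl)

lemma shift_eq_sidx (n : ℕ) (a : ℤ) (x : Fin n → ℂ) : shift n a x = fun k => x (sidx n a k) := rfl

lemma nrm2_shift (n : ℕ) (a : ℤ) (v : Fin n → ℂ) : nrm2 (shift n a v) = nrm2 v :=
  sum_sidx n a (fun k => ‖v k‖ ^ 2)

lemma l2_shift (n : ℕ) (a : ℤ) (v : Fin n → ℂ) : l2 (shift n a v) = l2 v := by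
  unfold l2; rw [nrm2_shift]

lemma gap_shift (n : ℕ) (a : ℤ) (v : Fin n → ℂ) : gap (shift n a v) = gap v := by
  unfold gap
  rw [show ∑ k, shift n a v k = ∑ k, v k from sum_sidx n a v]

lemma emod_sub_emod (a b n : ℤ) : (a % n - b) % n = (a - b) % n := by
  conv_lhs => rw [Int.sub_emod, Int.emod_emod_of_dvd a dvd_rfl, ← Int.sub_emod]

lemma shift_eq_of (n : ℕ) (a b : ℤ) (x : Fin n → ℂ) (k1 k2 : Fin n)
    (h : ((k1:ℤ) - a) % n = ((k2:ℤ) - b) % n) : shift n a x k1 = shift n b x k2 := by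
  unfold shift
  congr 1
  apply Fin.ext
  simp only
  omega

lemma shift_shift (n : ℕ) (a b : ℤ) (x : Fin n → ℂ) :
    shift n a (shift n b x) = shift n (a + b) x := by
  funext k
  show shift n b x (sidx n a k) = shift n (a+b) x k
  apply shift_eq_of
  have hk : ((sidx n a k : Fin n) : ℤ) = ((k:ℤ) - a) % n := by
    simp only [sidx]
    have h1 := Int.emod_nonneg ((k:ℤ) - a) (by exact_mod_cast k.pos.ne' : (n:ℤ) ≠ 0)
    omega
  rw [hk, emod_sub_emod]
  congr 1
  ring

lemma cconv_shift (N : ℕ) (m : ℤ) (x w : Fin N → ℂ) :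
    cconv N (shift N m x) w = shift N m (cconv N x w) := by
  funext k
  show cconv N (shift N m x) w k = cconv N x w (sidx N m k)
  unfold cconv
  refine Finset.sum_congr rfl (fun j _ => ?_)
  congr 1
  rw [show shift N (j:ℤ) (shift N m x) = shift N ((j:ℤ) + m) x from shift_shift N j m x]
  apply shift_eq_of
  have hk : ((sidx N m k : Fin N) : ℤ) = ((k:ℤ) - m) % N := by
    simp only [sidx]
    have h1 := Int.emod_nonneg ((k:ℤ) - m) (by exact_mod_cast k.pos.ne' : (N:ℤ) ≠ 0)
    omega
  rw [hk, emod_sub_emod]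
  congr 1
  ring

lemma crelu_shift (n : ℕ) (a : ℤ) (x : Fin n → ℂ) :
    crelu (shift n a x) = shift n a (crelu x) := rfl

lemma layer_shift (L : ℕ) (w u : Fin L → ℂ) (m : ℤ) :
    layer L w (shift L m u) = shift L m (layer L w u) := by
  unfold layer
  rw [cconv_shift, crelu_shift]

lemma poly_shift (L s : ℕ) (hd : s ∣ L) (j : Fin s) (m : ℤ) (v : Fin L → ℂ) :
    poly L s j (shift L m v) =
      shift (L / s) (-(((j:ℤ) - m) / s)) (poly L s (sidx s m j) v) := by
  funext k
  have hs : 0 < s := j.pos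
  have hLs : 0 < L / s := k.pos
  have hL : 0 < L := by
    have := Nat.div_le_self L s
    omega
  have hsZ : (0:ℤ) < s := by exact_mod_cast hs
  have hLsZ : (0:ℤ) < ((L/s : ℕ):ℤ) := by exact_mod_cast hLs
  have hLZ : (L:ℤ) = (s:ℤ) * ((L/s : ℕ):ℤ) := by exact_mod_cast (Nat.mul_div_cancel' hd).symm
  set a : ℤ := (j:ℤ) - m with ha
  set q : ℤ := a / s with hqdef
  set r : ℤ := a % s with hrdef
  have hr0 : 0 ≤ r := Int.emod_nonneg a (by exact_mod_cast hs.ne')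
  have hra : (s:ℤ) * q + r = a := Int.mul_ediv_add_emod a s
  set B : ℤ := (((k:ℤ) - -q) % ((L/s:ℕ):ℤ)) with hBdef
  have hB0 : 0 ≤ B := Int.emod_nonneg _ (by exact_mod_cast hLs.ne')
  have hBlt : B < ((L/s:ℕ):ℤ) := Int.emod_lt_of_pos _ hLsZ
  show shift L m v _ = poly L s (sidx s m j) v _
  unfold shift poly sidx
  congr 1
  apply Fin.ext
  simp only
  simp only [← ha, ← hqdef, ← hrdef, ← hBdef]
  -- goal : (((((j + k*s) % L : ℕ):ℤ) - m) % L).toNat = ((a%s).toNat + B.toNat * s) % L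
  have hc1 : ((((j:ℕ) + (k:ℕ)*s) % L : ℕ) : ℤ) = ((j:ℤ) + (k:ℤ)*(s:ℤ)) % (L:ℤ) := by push_cast; ring_nf
  have e1 : (((j:ℤ) + (k:ℤ)*(s:ℤ)) % (L:ℤ) - m) % L = ((j:ℤ) + (k:ℤ)*s - m) % L :=
    emod_sub_emod _ _ _
  have e2 : ((j:ℤ) + (k:ℤ)*(s:ℤ) - m) % L = (r + ((q + (k:ℤ))*s)) % L := by
    congr 1
    linear_combination -hra
  have e3 : ((q + (k:ℤ))*s) % L = (B * s) % L := by
    have h1 := Int.mul_emod_mul_of_pos ((k:ℤ) - -q) ((L/s:ℕ):ℤ) hsZ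
    -- h1 : s * (k - -q) % (s * (L/s)) = s * ((k - -q) % (L/s)) = s * B
    have c1 : ((q + (k:ℤ))*s) % (L:ℤ) = ((s:ℤ) * ((k:ℤ) - -q)) % ((s:ℤ) * ((L/s:ℕ):ℤ)) := by
      rw [← hLZ]; congr 1; ring
    have c2 : (B * s) % (L:ℤ) = (s:ℤ) * B := by
      rw [hLZ, mul_comm B s]
      exact Int.emod_eq_of_lt (by positivity) (by
        have := mul_lt_mul_of_pos_left hBlt hsZ
        linarith)
    rw [c1, h1, c2]
  have e4 : (r + ((q + (k:ℤ))*s)) % L = (r + B*s) % L := by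
    rw [Int.add_emod r ((q + (k:ℤ))*s), e3, ← Int.add_emod]
  have E : ((((j:ℤ) + (k:ℤ)*(s:ℤ)) % (L:ℤ)) - m) % L = (r + B*s) % L :=
    e1.trans (e2.trans e4)
  have hE0 : 0 ≤ ((((j:ℤ) + (k:ℤ)*(s:ℤ)) % (L:ℤ)) - m) % L :=
    Int.emod_nonneg _ (by exact_mod_cast hL.ne')
  have hcast : (((r.toNat + B.toNat * s) % L : ℕ) : ℤ) = (r + B*s) % (L:ℤ) := by
    push_cast [Int.toNat_of_nonneg hr0, Int.toNat_of_nonneg hB0]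
    ring_nf
  rw [hc1, E]
  have h0 : 0 ≤ (r + B*s) % (L:ℤ) := Int.emod_nonneg _ (by exact_mod_cast hL.ne')
  omega

lemma l2_poly_shift (L s : ℕ) (hd : s ∣ L) (j : Fin s) (m : ℤ) (v : Fin L → ℂ) :
    l2 (poly L s j (shift L m v)) = l2 (poly L s (sidx s m j) v) := by
  rw [poly_shift L s hd j m v, l2_shift]

lemma apsIdx_spec (L s : ℕ) (hs : 0 < s) (v : Fin L → ℂ) :
    ∀ j' : Fin s, l2 (poly L s j' v) ≤ l2 (poly L s (apsIdx L s hs v) v) := by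
  have h := (Finset.exists_max_image (Finset.univ : Finset (Fin s))
    (fun j => l2 (poly L s j v)) (Finset.univ_nonempty_iff.mpr ⟨⟨0, hs⟩⟩)).choose_spec
  exact fun j' => h.2 j' (Finset.mem_univ _)

lemma aps_shift (L s : ℕ) (hs : 0 < s) (hd : s ∣ L) (v : Fin L → ℂ) (m : ℤ)
    (hu : uniqueMax L s v) :
    ∃ m' : ℤ, aps L s hs (shift L m v) = shift (L / s) m' (aps L s hs v) := by
  obtain ⟨j0, hj0max, hj0uniq⟩ := hu
  have hidx : apsIdx L s hs v = j0 := hj0uniq _ (apsIdx_spec L s hs v)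
  set j1 := apsIdx L s hs (shift L m v) with hj1
  have hmax1 := apsIdx_spec L s hs (shift L m v)
  have hφ : Function.Surjective (sidx s m) :=
    ((Finite.injective_iff_bijective).mp (sidx_injective s m)).2
  have hmaxv : ∀ j' : Fin s, l2 (poly L s j' v) ≤ l2 (poly L s (sidx s m j1) v) := by
    intro j'
    obtain ⟨j'', rfl⟩ := hφ j'
    have h := hmax1 j''
    rwa [l2_poly_shift L s hd j'' m v, l2_poly_shift L s hd j1 m v] at h
  have hkey : sidx s m j1 = j0 := hj0uniq _ hmaxv
  refine ⟨-(((j1:ℤ) - m) / s), ?_⟩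
  unfold aps
  rw [← hj1, hidx, ← hkey]
  exact poly_shift L s hd j1 m v

lemma dft_shift (N : ℕ) (x xd : Fin N → ℂ) (m : ℤ)
    (hxd : ∀ n : Fin N, xd n = x n * Complex.exp (2 * Real.pi * Complex.I * m * n / N)) :
    dft N xd = shift N m (dft N x) := by
  funext k
  have hN : 0 < N := k.pos
  have hNZ : ((N:ℤ)) ≠ 0 := by exact_mod_cast hN.ne'
  have hNC : (N:ℂ) ≠ 0 := by exact_mod_cast hN.ne'
  show dft N xd k = dft N x (sidx N m k)
  have hK : ((sidx N m k : Fin N) : ℤ) = ((k:ℤ) - m) % N := by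
    simp only [sidx]
    have h1 := Int.emod_nonneg ((k:ℤ) - m) hNZ
    omega
  set K : Fin N := sidx N m k with hKdef
  have hdiv := Int.mul_ediv_add_emod ((k:ℤ) - m) (N:ℤ)
  set d : ℤ := ((k:ℤ) - m) / N with hd
  have hq : ((m:ℤ) - (k:ℤ) + ((K:ℕ):ℤ)) = (N:ℤ) * (-d) := by
    rw [hK]; linear_combination hdiv
  have hqC : (m:ℂ) - ((k:ℕ):ℂ) + ((K:ℕ):ℂ) = (N:ℂ) * (-(d:ℂ)) := by
    have := congrArg (fun z : ℤ => (z:ℂ)) hq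
    push_cast at this
    convert this using 2
  unfold dft
  refine Finset.sum_congr rfl (fun n _ => ?_)
  rw [hxd n, mul_assoc, ← Complex.exp_add]
  congr 1
  rw [Complex.exp_eq_exp_iff_exists_int]
  refine ⟨(n:ℤ) * (-d), ?_⟩
  push_cast
  field_simp
  ring_nf
  linear_combination ((n:ℕ):ℂ) * hqC

theorem stmt18 (N s : ℕ) (hs : 0 < s) (hN : 0 < N)
    (hd1 : s ∣ N) (hd2 : s ∣ N / s) (hd3 : s ∣ N / s / s)
    (w1 : Fin N → ℂ) (w2 : Fin (N / s) → ℂ) (w3 : Fin (N / s / s) → ℂ)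
    (x xd : Fin N → ℂ) (m : ℤ)
    (hxd : ∀ n : Fin N, xd n = x n * Complex.exp (2 * Real.pi * Complex.I * m * n / N))
    (hu1 : uniqueMax N s (layer N w1 (dft N x)))
    (hu2 : uniqueMax (N / s) s (layer (N / s) w2 (aps N s hs (layer N w1 (dft N x)))))
    (hu3 : uniqueMax (N / s / s) s (layer (N / s / s) w3
        (aps (N / s) s hs (layer (N / s) w2 (aps N s hs (layer N w1 (dft N x))))))) :
    net N s hs w1 w2 w3 xd = net N s hs w1 w2 w3 x := by
  have h0 : dft N xd = shift N m (dft N x) := dft_shift N x xd m hxd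
  unfold net
  rw [h0, layer_shift]
  obtain ⟨m1, h1⟩ := aps_shift N s hs hd1 _ m hu1
  rw [h1, layer_shift]
  obtain ⟨m2, h2⟩ := aps_shift (N/s) s hs hd2 _ m1 hu2
  rw [h2, layer_shift]
  obtain ⟨m3, h3⟩ := aps_shift (N/s/s) s hs hd3 _ m2 hu3
  rw [h3, gap_shift]
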